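/- For partial skew Dyck paths ending at level j, the generating function s_j satisfies s_j = z^j (3-3z²-W)/(2P^{j+1}) where W=√(1-6z²+5z⁴) and P = (1+z²+W)/2; in particular s_0 = (3-3z²-W)/(2P) = 1+z²+3z⁴+10z⁶+36z⁸+O(z^{10}) and s_1 = z(3-3z²-W)/(2P²) = z+2z³+6z⁵+21z⁷+79z⁹+O(z^{11}). -/

import Mathlib

inductive SkewStep : Type
  | up : SkewStep
  | down : SkewStep
  | red : SkewStep
deriving DecidableEq

def SkewStep.val : SkewStep → ℤ
  | SkewStep.up => 1
  | SkewStep.down => -1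
  | SkewStep.red => -1

def SkewStep.ok (a b : SkewStep) : Prop :=
  ¬ (a = SkewStep.up ∧ b = SkewStep.red) ∧ ¬ (a = SkewStep.red ∧ b = SkewStep.up)

def IsSkewPrefix (l : List SkewStep) : Prop :=
  l.Chain' SkewStep.ok ∧ ∀ k, 0 ≤ ((l.take k).map SkewStep.val).sum

def IsSkewPath (l : List SkewStep) (j : ℤ) : Prop :=
  IsSkewPrefix l ∧ (l.map SkewStep.val).sum = j

open PowerSeries

namespace SkewAux

instance : Fintype SkewStep := ⟨{.up, .down, .red}, by intro x; cases x <;> simp⟩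

lemma concat_path_iff (l : List SkewStep) (σ : SkewStep) (j : ℤ) :
    IsSkewPath (l ++ [σ]) j ↔
      IsSkewPath l (j - σ.val) ∧ (∀ τ ∈ l.getLast?, SkewStep.ok τ σ) ∧ 0 ≤ j := by
  unfold IsSkewPath IsSkewPrefix
  have hsum : ((l ++ [σ]).map SkewStep.val).sum = (l.map SkewStep.val).sum + σ.val := by
    simp
  constructor
  · rintro ⟨⟨hc, hpre⟩, htot⟩
    unfold List.Chain' at hc; rw [List.isChain_append] at hc
    rw [hsum] at htot
    have hl : (l.map SkewStep.val).sum = j - σ.val := by omega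
    have hpre' : ∀ k, 0 ≤ ((l.take k).map SkewStep.val).sum := by
      intro k
      have := hpre k
      rcases le_or_gt k l.length with h | h
      · rwa [List.take_append_of_le_length h] at this
      · rw [List.take_of_length_le (by omega)]
        have h0 := hpre l.length
        rwa [List.take_append_of_le_length le_rfl, List.take_of_length_le le_rfl] at h0
    have hj : 0 ≤ j := by
      have := hpre (l.length + 1)
      rw [List.take_of_length_le (by simp), hsum] at this; omega
    refine ⟨⟨⟨hc.1, hpre'⟩, hl⟩, ?_, hj⟩
    intro τ hτ
    exact hc.2.2 τ hτ σ (by simp)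
  · rintro ⟨⟨⟨hc, hpre⟩, hl⟩, hok, hj⟩
    refine ⟨⟨?_, ?_⟩, ?_⟩
    · unfold List.Chain'; rw [List.isChain_append]
      exact ⟨hc, List.isChain_singleton σ, fun x hx y hy => by simp at hy; subst hy; exact hok x hx⟩
    · intro k
      rcases le_or_gt k l.length with h | h
      · rw [List.take_append_of_le_length h]; exact hpre k
      · rw [List.take_of_length_le (by simp; omega), hsum, hl]
        omega
    · rw [hsum, hl]; ring

end SkewAux

namespace SkewAux2
open SkewAux

noncomputable def N (n : ℕ) (j : ℤ) (q : Option SkewStep → Prop) : ℕ :=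
  Nat.card {l : List SkewStep // l.length = n ∧ IsSkewPath l j ∧ q l.getLast?}

instance instFin (n : ℕ) (p : List SkewStep → Prop) :
    Finite {l : List SkewStep // l.length = n ∧ p l} :=
  Set.Finite.to_subtype
    (Set.Finite.subset (List.finite_length_eq SkewStep n) (fun _ hl => hl.1))

lemma N_congr {n : ℕ} {j : ℤ} {q q' : Option SkewStep → Prop}
    (h : ∀ l : List SkewStep, l.length = n → IsSkewPath l j →
      (q l.getLast? ↔ q' l.getLast?)) : N n j q = N n j q' :=
  Nat.card_congr (Equiv.subtypeEquivRight fun l => by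
    constructor
    · rintro ⟨h1, h2, h3⟩; exact ⟨h1, h2, (h l h1 h2).mp h3⟩
    · rintro ⟨h1, h2, h3⟩; exact ⟨h1, h2, (h l h1 h2).mpr h3⟩)

lemma sum_nonneg_of_path {l : List SkewStep} {j : ℤ} (h : IsSkewPath l j) : 0 ≤ j := by
  obtain ⟨⟨_, hpre⟩, hsum⟩ := h
  have := hpre l.length
  rwa [List.take_of_length_le le_rfl, hsum] at this

lemma N_neg {n : ℕ} {j : ℤ} (h : j < 0) (q : Option SkewStep → Prop) : N n j q = 0 := by
  have : IsEmpty {l : List SkewStep // l.length = n ∧ IsSkewPath l j ∧ q l.getLast?} :=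
    ⟨fun ⟨l, _, hp, _⟩ => absurd (sum_nonneg_of_path hp) (by omega)⟩
  exact Nat.card_of_isEmpty

lemma N_zero_zero (q : Option SkewStep → Prop) (h : q none) : N 0 0 q = 1 := by
  have e : {l : List SkewStep // l.length = 0 ∧ IsSkewPath l 0 ∧ q l.getLast?} ≃ Unit :=
    { toFun := fun _ => ()
      invFun := fun _ => ⟨[], rfl, ⟨⟨List.isChain_nil, fun k => by simp⟩, rfl⟩, h⟩
      left_inv := fun ⟨l, hl, _⟩ => by
        ext : 1; simp only; exact (List.length_eq_zero_iff.mp hl).symm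
      right_inv := fun _ => rfl }
  rw [N, Nat.card_congr e, Nat.card_unique]

lemma N_zero_ne {j : ℤ} (h : j ≠ 0) (q : Option SkewStep → Prop) : N 0 j q = 0 := by
  have : IsEmpty {l : List SkewStep // l.length = 0 ∧ IsSkewPath l j ∧ q l.getLast?} :=
    ⟨fun ⟨l, hl, hp, _⟩ => by
      obtain rfl := List.length_eq_zero_iff.mp hl
      exact h hp.2.symm⟩
  exact Nat.card_of_isEmpty

def concatEquiv (n : ℕ) (j : ℤ) (hj : 0 ≤ j) (σ : SkewStep) :
    {l : List SkewStep // l.length = n + 1 ∧ IsSkewPath l j ∧ l.getLast? = some σ} ≃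
    {l : List SkewStep // l.length = n ∧ IsSkewPath l (j - σ.val) ∧
        (∀ τ ∈ l.getLast?, SkewStep.ok τ σ)} where
  toFun x := ⟨x.1.dropLast, by
    obtain ⟨l, hlen, hpath, hlast⟩ := x
    obtain ⟨l', rfl⟩ := List.getLast?_eq_some_iff.mp hlast
    rw [concat_path_iff] at hpath
    simp only [List.dropLast_concat]
    simp only [List.length_append, List.length_singleton] at hlen
    exact ⟨by omega, hpath.1, hpath.2.1⟩⟩
  invFun y := ⟨y.1 ++ [σ], by
    obtain ⟨l, hlen, hpath, hok⟩ := y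
    exact ⟨by simp [hlen], (concat_path_iff _ _ _).mpr ⟨hpath, hok, hj⟩,
      List.getLast?_concat⟩⟩
  left_inv x := by
    obtain ⟨l, hlen, hpath, hlast⟩ := x
    obtain ⟨l', rfl⟩ := List.getLast?_eq_some_iff.mp hlast
    simp [List.dropLast_concat]
  right_inv y := by
    obtain ⟨l, _⟩ := y
    simp [List.dropLast_concat]

lemma N_concat (n : ℕ) (j : ℤ) (hj : 0 ≤ j) (σ : SkewStep) :
    N (n + 1) j (fun o => o = some σ)
      = N n (j - σ.val) (fun o => ∀ τ ∈ o, SkewStep.ok τ σ) :=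
  Nat.card_congr (concatEquiv n j hj σ)

lemma N_split (n : ℕ) (j : ℤ) (q r : Option SkewStep → Prop) [DecidablePred r] :
    N n j q = N n j (fun o => q o ∧ r o) + N n j (fun o => q o ∧ ¬ r o) := by
  have e : {l : List SkewStep // l.length = n ∧ IsSkewPath l j ∧ q l.getLast?} ≃
      {l : List SkewStep // l.length = n ∧ IsSkewPath l j ∧ q l.getLast? ∧ r l.getLast?} ⊕
      {l : List SkewStep // l.length = n ∧ IsSkewPath l j ∧ q l.getLast? ∧ ¬ r l.getLast?} :=
    { toFun := fun x =>
        if h : r x.1.getLast? then .inl ⟨x.1, x.2.1, x.2.2.1, x.2.2.2, h⟩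
        else .inr ⟨x.1, x.2.1, x.2.2.1, x.2.2.2, h⟩
      invFun := fun x => x.elim (fun y => ⟨y.1, y.2.1, y.2.2.1, y.2.2.2.1⟩)
        (fun y => ⟨y.1, y.2.1, y.2.2.1, y.2.2.2.1⟩)
      left_inv := fun x => by by_cases h : r x.1.getLast? <;> simp [h]
      right_inv := fun x => by
        rcases x with ⟨l, h⟩ | ⟨l, h⟩
        · simp [h.2.2.2]
        · simp [h.2.2.2] }
  rw [N, Nat.card_congr e, Nat.card_sum]; rfl

end SkewAux2

namespace SkewAux3
open SkewAux SkewAux2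

abbrev qAll : Option SkewStep → Prop := fun _ => True
abbrev qU : Option SkewStep → Prop := fun o => o = some SkewStep.up
abbrev qD : Option SkewStep → Prop := fun o => o = some SkewStep.down
abbrev qR : Option SkewStep → Prop := fun o => o = some SkewStep.red
abbrev qNR : Option SkewStep → Prop := fun o => o ≠ some SkewStep.red
abbrev qNU : Option SkewStep → Prop := fun o => o ≠ some SkewStep.up

lemma opt_up (o : Option SkewStep) :
    (∀ τ ∈ o, SkewStep.ok τ SkewStep.up) ↔ qNR o := by
  cases o with
  | none => simp
  | some τ => cases τ <;> simp [SkewStep.ok]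

lemma opt_down (o : Option SkewStep) :
    (∀ τ ∈ o, SkewStep.ok τ SkewStep.down) ↔ qAll o := by
  cases o with
  | none => simp
  | some τ => cases τ <;> simp [SkewStep.ok]

lemma opt_red (o : Option SkewStep) :
    (∀ τ ∈ o, SkewStep.ok τ SkewStep.red) ↔ qNU o := by
  cases o with
  | none => simp
  | some τ => cases τ <;> simp [SkewStep.ok]

lemma L1 (n : ℕ) (j : ℤ) (hj : 0 ≤ j) : N (n+1) j qU = N n (j-1) qNR := by
  rw [N_concat n j hj SkewStep.up]
  exact N_congr fun l _ _ => opt_up _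

lemma L2 (n : ℕ) (j : ℤ) (hj : 0 ≤ j) : N (n+1) j qD = N n (j+1) qAll := by
  have := N_concat n j hj SkewStep.down
  rw [show j - SkewStep.val SkewStep.down = j + 1 by simp [SkewStep.val]] at this
  rw [this]
  exact N_congr fun l _ _ => opt_down _

lemma L3 (n : ℕ) (j : ℤ) (hj : 0 ≤ j) : N (n+1) j qR = N n (j+1) qNU := by
  have := N_concat n j hj SkewStep.red
  rw [show j - SkewStep.val SkewStep.red = j + 1 by simp [SkewStep.val]] at this
  rw [this]
  exact N_congr fun l _ _ => opt_red _

lemma last_some {l : List SkewStep} {n : ℕ} (h : l.length = n + 1) :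
    ∃ τ, l.getLast? = some τ := by
  have : l ≠ [] := by intro hl; rw [hl] at h; simp at h
  exact Option.isSome_iff_exists.mp (List.getLast?_isSome.mpr this)

lemma split_all (n : ℕ) (j : ℤ) :
    N (n+1) j qAll = N (n+1) j qU + N (n+1) j qD + N (n+1) j qR := by
  have h1 := N_split (n+1) j qAll qU
  have e1 : N (n+1) j (fun o => qAll o ∧ qU o) = N (n+1) j qU :=
    N_congr fun l _ _ => by simp [qAll,qU,qD,qR,qNR,qNU]
  have h2 := N_split (n+1) j (fun o => qAll o ∧ ¬ qU o) qD
  have e2 : N (n+1) j (fun o => (qAll o ∧ ¬ qU o) ∧ qD o) = N (n+1) j qD :=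
    N_congr fun l _ _ => by
      constructor
      · exact fun h => h.2
      · intro h; simp [qAll,qU,qD,qR,qNR,qNU] at h ⊢; simp [h]
  have e3 : N (n+1) j (fun o => (qAll o ∧ ¬ qU o) ∧ ¬ qD o) = N (n+1) j qR := by
    refine N_congr fun l hl _ => ?_
    obtain ⟨τ, hτ⟩ := last_some hl
    rw [hτ]; cases τ <;> simp [qAll,qU,qD,qR,qNR,qNU]
  omega

lemma split_nr (n : ℕ) (j : ℤ) :
    N (n+1) j qNR = N (n+1) j qU + N (n+1) j qD := by
  have h1 := N_split (n+1) j qNR qU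
  have e1 : N (n+1) j (fun o => qNR o ∧ qU o) = N (n+1) j qU :=
    N_congr fun l _ _ => by
      constructor
      · exact fun h => h.2
      · intro h; simp [qAll,qU,qD,qR,qNR,qNU] at h ⊢; simp [h]
  have e2 : N (n+1) j (fun o => qNR o ∧ ¬ qU o) = N (n+1) j qD := by
    refine N_congr fun l hl _ => ?_
    obtain ⟨τ, hτ⟩ := last_some hl
    rw [hτ]; cases τ <;> simp [qAll,qU,qD,qR,qNR,qNU]
  omega

lemma split_nu (n : ℕ) (j : ℤ) :
    N (n+1) j qAll = N (n+1) j qU + N (n+1) j qNU := by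
  have h1 := N_split (n+1) j qAll qU
  have e1 : N (n+1) j (fun o => qAll o ∧ qU o) = N (n+1) j qU :=
    N_congr fun l _ _ => by simp [qAll,qU,qD,qR,qNR,qNU]
  have e2 : N (n+1) j (fun o => qAll o ∧ ¬ qU o) = N (n+1) j qNU :=
    N_congr fun l _ _ => by simp [qAll,qU,qD,qR,qNR,qNU]
  omega

lemma split_r (n : ℕ) (j : ℤ) :
    N (n+1) j qAll = N (n+1) j qNR + N (n+1) j qR := by
  have h1 := N_split (n+1) j qAll qR
  have e1 : N (n+1) j (fun o => qAll o ∧ qR o) = N (n+1) j qR :=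
    N_congr fun l _ _ => by simp [qAll,qU,qD,qR,qNR,qNU]
  have e2 : N (n+1) j (fun o => qAll o ∧ ¬ qR o) = N (n+1) j qNR :=
    N_congr fun l _ _ => by simp [qAll,qU,qD,qR,qNR,qNU]
  omega

end SkewAux3

namespace SkewAux4
open SkewAux SkewAux2 SkewAux3 PowerSeries

noncomputable def G (j : ℕ) : PowerSeries ℚ := PowerSeries.mk fun n => (N n (j : ℤ) qNR : ℚ)

lemma coeff_G (j n : ℕ) : coeff n (G j) = (N n (j : ℤ) qNR : ℚ) := coeff_mk n _

lemma coeff_X2_mul (f : PowerSeries ℚ) (n : ℕ) :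
    coeff (n + 2) (X ^ 2 * f) = coeff n f := by
  rw [pow_two, mul_assoc]
  exact (coeff_succ_X_mul (n+1) (X * f)).trans (coeff_succ_X_mul n f)

lemma coeff_zero_X_mul' (f : PowerSeries ℚ) : coeff 0 (X * f) = 0 := by
  simp [PowerSeries.coeff_zero_eq_constantCoeff]

lemma coeff_zero_X2_mul (f : PowerSeries ℚ) : coeff 0 (X ^ 2 * f) = 0 := by
  simp [PowerSeries.coeff_zero_eq_constantCoeff]

lemma coeff_one_X2_mul (f : PowerSeries ℚ) : coeff 1 (X ^ 2 * f) = 0 := by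
  rw [pow_two, mul_assoc]
  rw [show (1 : ℕ) = 0 + 1 from rfl, coeff_succ_X_mul]
  exact coeff_zero_X_mul' f

lemma N_len0 (j : ℤ) (q q' : Option SkewStep → Prop) (h : q none ↔ q' none) :
    N 0 j q = N 0 j q' :=
  N_congr fun l hl _ => by
    obtain rfl := List.length_eq_zero_iff.mp hl
    simpa using h

variable (s : ℕ → PowerSeries ℚ)
    (hsN : ∀ j n : ℕ, PowerSeries.coeff n (s j) = (N n (j : ℤ) qAll : ℚ))

include hsN

lemma hG0 : G 0 = 1 + X * s 1 := by
  ext n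
  cases n with
  | zero =>
    have h : N 0 ((0:ℕ):ℤ) qNR = 1 := by
      rw [Nat.cast_zero]; exact N_zero_zero qNR (by simp [qNR])
    rw [coeff_G, map_add, coeff_zero_X_mul', h]
    simp
  | succ n =>
    rw [coeff_G, map_add, coeff_succ_X_mul, hsN]
    have key : N (n+1) (0 : ℤ) qNR = N n (1 : ℤ) qAll := by
      have h1 := split_nr n 0
      have h2 := L1 n 0 le_rfl
      have h3 := L2 n 0 le_rfl
      rw [show (0:ℤ)+1 = 1 by ring] at h3
      have h4 : N n ((0 : ℤ) - 1) qNR = 0 := N_neg (by norm_num) qNR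
      omega
    rw [show ((0:ℕ):ℤ) = (0:ℤ) from rfl, key]
    simp [PowerSeries.coeff_one]

lemma hGsucc (j : ℕ) : G (j + 1) = X * G j + X * s (j + 2) := by
  ext n
  cases n with
  | zero =>
    rw [coeff_G, map_add, coeff_zero_X_mul', coeff_zero_X_mul',
      N_zero_ne (by exact_mod_cast Nat.succ_ne_zero j) qNR]
    simp
  | succ n =>
    rw [coeff_G, map_add, coeff_succ_X_mul, coeff_succ_X_mul, coeff_G, hsN]
    have h1 := split_nr n ((j:ℤ)+1)
    have h2 := L1 n ((j:ℤ)+1) (by positivity)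
    have h3 := L2 n ((j:ℤ)+1) (by positivity)
    have e1 : ((j:ℤ)+1) - 1 = (j:ℤ) := by ring
    have e2 : ((j:ℤ)+1) + 1 = ((j+2 : ℕ) : ℤ) := by push_cast; ring
    rw [e1] at h2; rw [e2] at h3
    have key : N (n+1) ((j:ℤ)+1) qNR = N n (j:ℤ) qNR + N n ((j+2:ℕ):ℤ) qAll := by omega
    rw [show ((j+1:ℕ):ℤ) = (j:ℤ)+1 by push_cast; ring, key]
    push_cast
    ring

lemma hseq (j : ℕ) : s j + X ^ 2 * G j = G j + X * s (j + 1) := by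
  have e2 : (j:ℤ) + 1 = ((j+1 : ℕ) : ℤ) := by push_cast; ring
  ext n
  match n with
  | 0 =>
    rw [map_add, map_add, coeff_zero_X_mul', coeff_zero_X2_mul, hsN, coeff_G]
    rw [N_len0 (j:ℤ) qAll qNR (by simp [qAll, qNR])]
  | 1 =>
    rw [map_add, map_add, coeff_one_X2_mul, hsN, coeff_G,
      show (1:ℕ) = 0 + 1 from rfl, coeff_succ_X_mul, hsN]
    have h1 := split_r 0 (j:ℤ)
    have h2 := L3 0 (j:ℤ) (by positivity)
    have h3 : N 0 ((j:ℤ)+1) qNU = N 0 ((j:ℤ)+1) qAll :=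
      N_len0 _ _ _ (by simp [qAll, qNU])
    rw [e2] at h2 h3
    have key : N (0+1) (j:ℤ) qAll = N (0+1) (j:ℤ) qNR + N 0 ((j+1:ℕ):ℤ) qAll := by omega
    rw [key]
    push_cast
    ring
  | (n+2) =>
    rw [map_add, map_add, coeff_X2_mul, hsN, coeff_G, coeff_G,
      show n+2 = (n+1)+1 from rfl, coeff_succ_X_mul, hsN]
    have h1 := split_r (n+1) (j:ℤ)
    have h2 := L3 (n+1) (j:ℤ) (by positivity)
    have h3 := split_nu n ((j:ℤ)+1)
    have h4 := L1 n ((j:ℤ)+1) (by positivity)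
    have e1 : ((j:ℤ)+1) - 1 = (j:ℤ) := by ring
    rw [e1] at h4
    rw [e2] at h2 h3 h4
    have key : N (n+1+1) (j:ℤ) qAll + N n (j:ℤ) qNR
        = N (n+1+1) (j:ℤ) qNR + N (n+1) ((j+1:ℕ):ℤ) qAll := by omega
    push_cast
    exact_mod_cast key

end SkewAux4

namespace SkewAux5
open PowerSeries

lemma coeff_mul_low (g f : PowerSeries ℚ) (n : ℕ)
    (hf : ∀ m, m < n → coeff m f = 0) :
    coeff n (g * f) = coeff 0 g * coeff n f := by
  rw [coeff_mul]
  apply Finset.sum_eq_single (0, n)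
  · rintro ⟨i, k⟩ hb hne
    rw [Finset.HasAntidiagonal.mem_antidiagonal] at hb
    have hk : k < n := by
      rcases Nat.lt_or_ge k n with h | h
      · exact h
      · exfalso; apply hne; simp at hb ⊢; omega
    rw [hf k hk, mul_zero]
  · intro h
    exact absurd (Finset.HasAntidiagonal.mem_antidiagonal.mpr (by simp)) h

lemma unique_zero (Q : PowerSeries ℚ) (hQ0 : constantCoeff Q = 1)
    (e : ℕ → PowerSeries ℚ)
    (h0 : Q * e 0 = (2 * X - X ^ 3) * e 1)
    (hr : ∀ j, (2 * X - X ^ 3) * e (j + 2)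
        = (1 + X ^ 2) * Q * e (j + 1) - X * Q ^ 2 * e j) :
    ∀ j, e j = 0 := by
  have c1 : coeff 0 (2 * X - X ^ 3 : PowerSeries ℚ) = 0 := by
    simp [PowerSeries.coeff_zero_eq_constantCoeff]
  have c2 : coeff 0 ((1 + X ^ 2) * Q) = 1 := by
    simp [PowerSeries.coeff_zero_eq_constantCoeff, map_mul, hQ0]
  have c3 : coeff 0 (X * Q ^ 2) = 0 := by
    simp [PowerSeries.coeff_zero_eq_constantCoeff]
  have c4 : coeff 0 Q = 1 := by
    rw [PowerSeries.coeff_zero_eq_constantCoeff]; exact hQ0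
  have main : ∀ n j, coeff n (e j) = 0 := by
    intro n
    induction n using Nat.strong_induction_on with
    | _ n IH =>
      intro j
      have hlow : ∀ i m, m < n → coeff m (e i) = 0 := fun i m hm => IH m hm i
      have hsucc : ∀ i, coeff n (e (i + 1)) = 0 := by
        intro i
        have h := congrArg (coeff n) (hr i)
        rw [coeff_mul_low _ _ n (hlow _), c1, map_sub,
          coeff_mul_low _ _ n (hlow _), coeff_mul_low _ _ n (hlow _),
          c2, c3] at h
        simpa using h.symm
      cases j with
      | zero =>
        have h := congrArg (coeff n) h0
        rw [coeff_mul_low _ _ n (hlow _), c4, coeff_mul_low _ _ n (hlow _),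
          c1, hsucc 0] at h
        simpa using h
      | succ i => exact hsucc i
  intro j
  ext n
  rw [main n j, map_zero]

lemma coeff_two (n : ℕ) : coeff n (2 : PowerSeries ℚ) = if n = 0 then 2 else 0 := by
  rw [← map_ofNat (PowerSeries.C (R := ℚ)) 2, PowerSeries.coeff_C]

lemma constantCoeff_two : PowerSeries.constantCoeff (2 : PowerSeries ℚ) = 2 := by
  rw [← map_ofNat (PowerSeries.C (R := ℚ)) 2, PowerSeries.constantCoeff_C]

end SkewAux5
set_option maxHeartbeats 4000000 in
open PowerSeries SkewAux SkewAux2 SkewAux3 SkewAux4 SkewAux5 in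
/-- For partial skew Dyck paths ending at level `j`, the generating function
`s_j` satisfies `s_j · 2P^{j+1} = z^j (3-3z²-W)` where `W = √(1-6z²+5z⁴)` and
`P = (1+z²+W)/2`; in particular
`s₀ = 1+z²+3z⁴+10z⁶+36z⁸+⋯` and `s₁ = z+2z³+6z⁵+21z⁷+79z⁹+⋯`. -/
theorem partial_paths_level_j (s : ℕ → PowerSeries ℚ) (W P : PowerSeries ℚ)
    (hs : ∀ j n : ℕ, PowerSeries.coeff n (s j)
        = Nat.card {l : List SkewStep // l.length = n ∧ IsSkewPath l (j : ℤ)})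
    (hW : W ^ 2 = 1 - 6 * PowerSeries.X ^ 2 + 5 * PowerSeries.X ^ 4)
    (hW0 : PowerSeries.coeff 0 W = 1)
    (hP : 2 * P = 1 + PowerSeries.X ^ 2 + W) :
    (∀ j : ℕ, s j * (2 * P ^ (j + 1))
        = PowerSeries.X ^ j * (3 - 3 * PowerSeries.X ^ 2 - W)) ∧
    PowerSeries.coeff 0 (s 0) = 1 ∧ PowerSeries.coeff 2 (s 0) = 1 ∧
    PowerSeries.coeff 4 (s 0) = 3 ∧ PowerSeries.coeff 6 (s 0) = 10 ∧
    PowerSeries.coeff 8 (s 0) = 36 ∧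
    PowerSeries.coeff 1 (s 1) = 1 ∧ PowerSeries.coeff 3 (s 1) = 2 ∧
    PowerSeries.coeff 5 (s 1) = 6 ∧ PowerSeries.coeff 7 (s 1) = 21 ∧
    PowerSeries.coeff 9 (s 1) = 79 := by
  classical
  have hsN : ∀ j n : ℕ, PowerSeries.coeff n (s j) = (N n (j : ℤ) qAll : ℚ) := by
    intro j n
    rw [hs j n]
    have : Nat.card {l : List SkewStep // l.length = n ∧ IsSkewPath l (j : ℤ)}
        = N n (j : ℤ) qAll :=
      Nat.card_congr (Equiv.subtypeEquivRight fun l => by simp [qAll])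
    exact_mod_cast congrArg (Nat.cast : ℕ → ℚ) this
  have hB : s 0 = 1 - X ^ 2 + (2 * X - X ^ 3) * s 1 := by
    have g0 := hG0 s hsN
    have sq := hseq s hsN 0
    linear_combination sq + (1 - X ^ 2) * g0
  have hR : ∀ j : ℕ, (1 + X ^ 2) * s (j + 1) = X * s j + (2 * X - X ^ 3) * s (j + 2) := by
    intro j
    have q1 := hseq s hsN (j + 1)
    have e12 : j + 1 + 1 = j + 2 := rfl
    rw [e12] at q1
    have q2 := hGsucc s hsN j
    have q3 := hseq s hsN j
    linear_combination q1 + (1 - X ^ 2) * q2 - X * q3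
  -- replace W
  have hW' : W = 2 * P - 1 - X ^ 2 := by linear_combination -hP
  subst hW'
  have hP2 : P ^ 2 = (1 + X ^ 2) * P - 2 * X ^ 2 + X ^ 4 := by
    have h4 : (4 : PowerSeries ℚ) * (P ^ 2 - ((1 + X ^ 2) * P - 2 * X ^ 2 + X ^ 4)) = 0 := by
      linear_combination hW
    have h4' : (4 : PowerSeries ℚ) ≠ 0 := by
      intro h
      have := congrArg (PowerSeries.constantCoeff) h
      rw [map_ofNat] at this
      norm_num at this
    rcases mul_eq_zero.mp h4 with h | h
    · exact absurd h h4'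
    · linear_combination h
  have hP0 : PowerSeries.constantCoeff P = 1 := by
    have := hW0
    rw [PowerSeries.coeff_zero_eq_constantCoeff] at this
    simp only [map_sub, map_mul, map_pow, map_one, map_ofNat,
      PowerSeries.constantCoeff_X] at this
    norm_num at this
    linarith
  have hmain : ∀ j : ℕ, s j * (2 * P ^ (j + 1))
      = X ^ j * (3 - 3 * X ^ 2 - (2 * P - 1 - X ^ 2)) := by
    have hz := unique_zero P hP0
      (fun j => s j * (2 * P ^ (j + 1)) - X ^ j * (4 - 2 * X ^ 2 - 2 * P))
      (by
        show P * (s 0 * (2 * P ^ (0 + 1)) - X ^ 0 * (4 - 2 * X ^ 2 - 2 * P))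
          = (2 * X - X ^ 3) * (s 1 * (2 * P ^ (1 + 1)) - X ^ 1 * (4 - 2 * X ^ 2 - 2 * P))
        linear_combination (2 * P ^ 2) * hB + (4 - 2 * X ^ 2) * hP2)
      (by
        intro j
        show (2 * X - X ^ 3) * (s (j + 2) * (2 * P ^ (j + 2 + 1)) - X ^ (j + 2) * (4 - 2 * X ^ 2 - 2 * P))
          = (1 + X ^ 2) * P * (s (j + 1) * (2 * P ^ (j + 1 + 1)) - X ^ (j + 1) * (4 - 2 * X ^ 2 - 2 * P))
            - X * P ^ 2 * (s j * (2 * P ^ (j + 1)) - X ^ j * (4 - 2 * X ^ 2 - 2 * P))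
        linear_combination (-(2 * P ^ (j + 3))) * hR j
          + (-(X ^ (j + 1)) * (4 - 2 * X ^ 2 - 2 * P)) * hP2)
    intro j
    have := hz j
    linear_combination this
  refine ⟨hmain, ?_⟩
  -- numeric coefficient extraction
  have h2ne : (2 : PowerSeries ℚ) ≠ 0 := by
    intro h
    have := congrArg (PowerSeries.constantCoeff) h
    rw [SkewAux5.constantCoeff_two] at this
    norm_num at this
  have hS0 : s 0 * P + X ^ 2 + P = 1 + 1 := by
    have h := hmain 0
    have h2 : (2 : PowerSeries ℚ) * (s 0 * P + X ^ 2 + P) = 2 * (1 + 1) := by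
      linear_combination h
    exact mul_left_cancel₀ h2ne h2
  have hS1 : s 1 * (P * P) + X ^ 3 + X * P = X + X := by
    have h := hmain 1
    have h2 : (2 : PowerSeries ℚ) * (s 1 * (P * P) + X ^ 3 + X * P) = 2 * (X + X) := by
      linear_combination h
    exact mul_left_cancel₀ h2ne h2
  have hP2' : P * P + X ^ 2 + X ^ 2 = P + X ^ 2 * P + X ^ 4 := by linear_combination hP2
  have p0 : PowerSeries.coeff 0 P = 1 := by
    rw [PowerSeries.coeff_zero_eq_constantCoeff]; exact hP0
  have p1 : PowerSeries.coeff 1 P = (0 : ℚ) := by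
    have h := congrArg (PowerSeries.coeff 1) hP2'
    norm_num [SkewAux5.coeff_two, SkewAux5.constantCoeff_two, PowerSeries.coeff_mul, Finset.Nat.sum_antidiagonal_eq_sum_range_succ_mk, Finset.sum_range_succ, Finset.sum_range_zero, PowerSeries.coeff_X_pow, PowerSeries.coeff_X, PowerSeries.coeff_one, map_add, map_one, map_ofNat, p0] at h
    linarith
  have p2 : PowerSeries.coeff 2 P = (-1 : ℚ) := by
    have h := congrArg (PowerSeries.coeff 2) hP2'
    norm_num [SkewAux5.coeff_two, SkewAux5.constantCoeff_two, PowerSeries.coeff_mul, Finset.Nat.sum_antidiagonal_eq_sum_range_succ_mk, Finset.sum_range_succ, Finset.sum_range_zero, PowerSeries.coeff_X_pow, PowerSeries.coeff_X, PowerSeries.coeff_one, map_add, map_one, map_ofNat, p0, p1] at h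
    linarith
  have p3 : PowerSeries.coeff 3 P = (0 : ℚ) := by
    have h := congrArg (PowerSeries.coeff 3) hP2'
    norm_num [SkewAux5.coeff_two, SkewAux5.constantCoeff_two, PowerSeries.coeff_mul, Finset.Nat.sum_antidiagonal_eq_sum_range_succ_mk, Finset.sum_range_succ, Finset.sum_range_zero, PowerSeries.coeff_X_pow, PowerSeries.coeff_X, PowerSeries.coeff_one, map_add, map_one, map_ofNat, p0, p1, p2] at h
    linarith
  have p4 : PowerSeries.coeff 4 P = (-1 : ℚ) := by
    have h := congrArg (PowerSeries.coeff 4) hP2'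
    norm_num [SkewAux5.coeff_two, SkewAux5.constantCoeff_two, PowerSeries.coeff_mul, Finset.Nat.sum_antidiagonal_eq_sum_range_succ_mk, Finset.sum_range_succ, Finset.sum_range_zero, PowerSeries.coeff_X_pow, PowerSeries.coeff_X, PowerSeries.coeff_one, map_add, map_one, map_ofNat, p0, p1, p2, p3] at h
    linarith
  have p5 : PowerSeries.coeff 5 P = (0 : ℚ) := by
    have h := congrArg (PowerSeries.coeff 5) hP2'
    norm_num [SkewAux5.coeff_two, SkewAux5.constantCoeff_two, PowerSeries.coeff_mul, Finset.Nat.sum_antidiagonal_eq_sum_range_succ_mk, Finset.sum_range_succ, Finset.sum_range_zero, PowerSeries.coeff_X_pow, PowerSeries.coeff_X, PowerSeries.coeff_one, map_add, map_one, map_ofNat, p0, p1, p2, p3, p4] at h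
    linarith
  have p6 : PowerSeries.coeff 6 P = (-3 : ℚ) := by
    have h := congrArg (PowerSeries.coeff 6) hP2'
    norm_num [SkewAux5.coeff_two, SkewAux5.constantCoeff_two, PowerSeries.coeff_mul, Finset.Nat.sum_antidiagonal_eq_sum_range_succ_mk, Finset.sum_range_succ, Finset.sum_range_zero, PowerSeries.coeff_X_pow, PowerSeries.coeff_X, PowerSeries.coeff_one, map_add, map_one, map_ofNat, p0, p1, p2, p3, p4, p5] at h
    linarith
  have p7 : PowerSeries.coeff 7 P = (0 : ℚ) := by
    have h := congrArg (PowerSeries.coeff 7) hP2'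
    norm_num [SkewAux5.coeff_two, SkewAux5.constantCoeff_two, PowerSeries.coeff_mul, Finset.Nat.sum_antidiagonal_eq_sum_range_succ_mk, Finset.sum_range_succ, Finset.sum_range_zero, PowerSeries.coeff_X_pow, PowerSeries.coeff_X, PowerSeries.coeff_one, map_add, map_one, map_ofNat, p0, p1, p2, p3, p4, p5, p6] at h
    linarith
  have p8 : PowerSeries.coeff 8 P = (-10 : ℚ) := by
    have h := congrArg (PowerSeries.coeff 8) hP2'
    norm_num [SkewAux5.coeff_two, SkewAux5.constantCoeff_two, PowerSeries.coeff_mul, Finset.Nat.sum_antidiagonal_eq_sum_range_succ_mk, Finset.sum_range_succ, Finset.sum_range_zero, PowerSeries.coeff_X_pow, PowerSeries.coeff_X, PowerSeries.coeff_one, map_add, map_one, map_ofNat, p0, p1, p2, p3, p4, p5, p6, p7] at h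
    linarith
  have t0 : PowerSeries.coeff 0 (s 0) = (1 : ℚ) := by
    have h := congrArg (PowerSeries.coeff 0) hS0
    rw [PowerSeries.coeff_zero_eq_constantCoeff]
    norm_num [hP0, SkewAux5.coeff_two, SkewAux5.constantCoeff_two, PowerSeries.coeff_mul, Finset.Nat.sum_antidiagonal_eq_sum_range_succ_mk, Finset.sum_range_succ, Finset.sum_range_zero, PowerSeries.coeff_X_pow, PowerSeries.coeff_X, PowerSeries.coeff_one, map_add, map_one, map_ofNat, p0, p1, p2, p3, p4, p5, p6, p7, p8] at h
    linarith
  have t1 : PowerSeries.coeff 1 (s 0) = (0 : ℚ) := by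
    have h := congrArg (PowerSeries.coeff 1) hS0
    norm_num [SkewAux5.coeff_two, SkewAux5.constantCoeff_two, PowerSeries.coeff_mul, Finset.Nat.sum_antidiagonal_eq_sum_range_succ_mk, Finset.sum_range_succ, Finset.sum_range_zero, PowerSeries.coeff_X_pow, PowerSeries.coeff_X, PowerSeries.coeff_one, map_add, map_one, map_ofNat, p0, p1, p2, p3, p4, p5, p6, p7, p8, t0] at h
    linarith
  have t2 : PowerSeries.coeff 2 (s 0) = (1 : ℚ) := by
    have h := congrArg (PowerSeries.coeff 2) hS0
    norm_num [SkewAux5.coeff_two, SkewAux5.constantCoeff_two, PowerSeries.coeff_mul, Finset.Nat.sum_antidiagonal_eq_sum_range_succ_mk, Finset.sum_range_succ, Finset.sum_range_zero, PowerSeries.coeff_X_pow, PowerSeries.coeff_X, PowerSeries.coeff_one, map_add, map_one, map_ofNat, p0, p1, p2, p3, p4, p5, p6, p7, p8, t0, t1] at h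
    linarith
  have t3 : PowerSeries.coeff 3 (s 0) = (0 : ℚ) := by
    have h := congrArg (PowerSeries.coeff 3) hS0
    norm_num [SkewAux5.coeff_two, SkewAux5.constantCoeff_two, PowerSeries.coeff_mul, Finset.Nat.sum_antidiagonal_eq_sum_range_succ_mk, Finset.sum_range_succ, Finset.sum_range_zero, PowerSeries.coeff_X_pow, PowerSeries.coeff_X, PowerSeries.coeff_one, map_add, map_one, map_ofNat, p0, p1, p2, p3, p4, p5, p6, p7, p8, t0, t1, t2] at h
    linarith
  have t4 : PowerSeries.coeff 4 (s 0) = (3 : ℚ) := by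
    have h := congrArg (PowerSeries.coeff 4) hS0
    norm_num [SkewAux5.coeff_two, SkewAux5.constantCoeff_two, PowerSeries.coeff_mul, Finset.Nat.sum_antidiagonal_eq_sum_range_succ_mk, Finset.sum_range_succ, Finset.sum_range_zero, PowerSeries.coeff_X_pow, PowerSeries.coeff_X, PowerSeries.coeff_one, map_add, map_one, map_ofNat, p0, p1, p2, p3, p4, p5, p6, p7, p8, t0, t1, t2, t3] at h
    linarith
  have t5 : PowerSeries.coeff 5 (s 0) = (0 : ℚ) := by
    have h := congrArg (PowerSeries.coeff 5) hS0
    norm_num [SkewAux5.coeff_two, SkewAux5.constantCoeff_two, PowerSeries.coeff_mul, Finset.Nat.sum_antidiagonal_eq_sum_range_succ_mk, Finset.sum_range_succ, Finset.sum_range_zero, PowerSeries.coeff_X_pow, PowerSeries.coeff_X, PowerSeries.coeff_one, map_add, map_one, map_ofNat, p0, p1, p2, p3, p4, p5, p6, p7, p8, t0, t1, t2, t3, t4] at h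
    linarith
  have t6 : PowerSeries.coeff 6 (s 0) = (10 : ℚ) := by
    have h := congrArg (PowerSeries.coeff 6) hS0
    norm_num [SkewAux5.coeff_two, SkewAux5.constantCoeff_two, PowerSeries.coeff_mul, Finset.Nat.sum_antidiagonal_eq_sum_range_succ_mk, Finset.sum_range_succ, Finset.sum_range_zero, PowerSeries.coeff_X_pow, PowerSeries.coeff_X, PowerSeries.coeff_one, map_add, map_one, map_ofNat, p0, p1, p2, p3, p4, p5, p6, p7, p8, t0, t1, t2, t3, t4, t5] at h
    linarith
  have t7 : PowerSeries.coeff 7 (s 0) = (0 : ℚ) := by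
    have h := congrArg (PowerSeries.coeff 7) hS0
    norm_num [SkewAux5.coeff_two, SkewAux5.constantCoeff_two, PowerSeries.coeff_mul, Finset.Nat.sum_antidiagonal_eq_sum_range_succ_mk, Finset.sum_range_succ, Finset.sum_range_zero, PowerSeries.coeff_X_pow, PowerSeries.coeff_X, PowerSeries.coeff_one, map_add, map_one, map_ofNat, p0, p1, p2, p3, p4, p5, p6, p7, p8, t0, t1, t2, t3, t4, t5, t6] at h
    linarith
  have t8 : PowerSeries.coeff 8 (s 0) = (36 : ℚ) := by
    have h := congrArg (PowerSeries.coeff 8) hS0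
    norm_num [SkewAux5.coeff_two, SkewAux5.constantCoeff_two, PowerSeries.coeff_mul, Finset.Nat.sum_antidiagonal_eq_sum_range_succ_mk, Finset.sum_range_succ, Finset.sum_range_zero, PowerSeries.coeff_X_pow, PowerSeries.coeff_X, PowerSeries.coeff_one, map_add, map_one, map_ofNat, p0, p1, p2, p3, p4, p5, p6, p7, p8, t0, t1, t2, t3, t4, t5, t6, t7] at h
    linarith
  have u0 : PowerSeries.coeff 0 (s 1) = (0 : ℚ) := by
    have h := congrArg (PowerSeries.coeff 0) hS1
    rw [PowerSeries.coeff_zero_eq_constantCoeff]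
    norm_num [hP0, SkewAux5.coeff_two, SkewAux5.constantCoeff_two, PowerSeries.coeff_mul, Finset.Nat.sum_antidiagonal_eq_sum_range_succ_mk, Finset.sum_range_succ, Finset.sum_range_zero, PowerSeries.coeff_X_pow, PowerSeries.coeff_X, PowerSeries.coeff_one, map_add, map_one, map_ofNat, p0, p1, p2, p3, p4, p5, p6, p7, p8, t0, t1, t2, t3, t4, t5, t6, t7, t8] at h
    linarith
  have u1 : PowerSeries.coeff 1 (s 1) = (1 : ℚ) := by
    have h := congrArg (PowerSeries.coeff 1) hS1
    norm_num [SkewAux5.coeff_two, SkewAux5.constantCoeff_two, PowerSeries.coeff_mul, Finset.Nat.sum_antidiagonal_eq_sum_range_succ_mk, Finset.sum_range_succ, Finset.sum_range_zero, PowerSeries.coeff_X_pow, PowerSeries.coeff_X, PowerSeries.coeff_one, map_add, map_one, map_ofNat, p0, p1, p2, p3, p4, p5, p6, p7, p8, t0, t1, t2, t3, t4, t5, t6, t7, t8, u0] at h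
    linarith
  have u2 : PowerSeries.coeff 2 (s 1) = (0 : ℚ) := by
    have h := congrArg (PowerSeries.coeff 2) hS1
    norm_num [SkewAux5.coeff_two, SkewAux5.constantCoeff_two, PowerSeries.coeff_mul, Finset.Nat.sum_antidiagonal_eq_sum_range_succ_mk, Finset.sum_range_succ, Finset.sum_range_zero, PowerSeries.coeff_X_pow, PowerSeries.coeff_X, PowerSeries.coeff_one, map_add, map_one, map_ofNat, p0, p1, p2, p3, p4, p5, p6, p7, p8, t0, t1, t2, t3, t4, t5, t6, t7, t8, u0, u1] at h
    linarith
  have u3 : PowerSeries.coeff 3 (s 1) = (2 : ℚ) := by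
    have h := congrArg (PowerSeries.coeff 3) hS1
    norm_num [SkewAux5.coeff_two, SkewAux5.constantCoeff_two, PowerSeries.coeff_mul, Finset.Nat.sum_antidiagonal_eq_sum_range_succ_mk, Finset.sum_range_succ, Finset.sum_range_zero, PowerSeries.coeff_X_pow, PowerSeries.coeff_X, PowerSeries.coeff_one, map_add, map_one, map_ofNat, p0, p1, p2, p3, p4, p5, p6, p7, p8, t0, t1, t2, t3, t4, t5, t6, t7, t8, u0, u1, u2] at h
    linarith
  have u4 : PowerSeries.coeff 4 (s 1) = (0 : ℚ) := by
    have h := congrArg (PowerSeries.coeff 4) hS1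
    norm_num [SkewAux5.coeff_two, SkewAux5.constantCoeff_two, PowerSeries.coeff_mul, Finset.Nat.sum_antidiagonal_eq_sum_range_succ_mk, Finset.sum_range_succ, Finset.sum_range_zero, PowerSeries.coeff_X_pow, PowerSeries.coeff_X, PowerSeries.coeff_one, map_add, map_one, map_ofNat, p0, p1, p2, p3, p4, p5, p6, p7, p8, t0, t1, t2, t3, t4, t5, t6, t7, t8, u0, u1, u2, u3] at h
    linarith
  have u5 : PowerSeries.coeff 5 (s 1) = (6 : ℚ) := by
    have h := congrArg (PowerSeries.coeff 5) hS1
    norm_num [SkewAux5.coeff_two, SkewAux5.constantCoeff_two, PowerSeries.coeff_mul, Finset.Nat.sum_antidiagonal_eq_sum_range_succ_mk, Finset.sum_range_succ, Finset.sum_range_zero, PowerSeries.coeff_X_pow, PowerSeries.coeff_X, PowerSeries.coeff_one, map_add, map_one, map_ofNat, p0, p1, p2, p3, p4, p5, p6, p7, p8, t0, t1, t2, t3, t4, t5, t6, t7, t8, u0, u1, u2, u3, u4] at h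
    linarith
  have u6 : PowerSeries.coeff 6 (s 1) = (0 : ℚ) := by
    have h := congrArg (PowerSeries.coeff 6) hS1
    norm_num [SkewAux5.coeff_two, SkewAux5.constantCoeff_two, PowerSeries.coeff_mul, Finset.Nat.sum_antidiagonal_eq_sum_range_succ_mk, Finset.sum_range_succ, Finset.sum_range_zero, PowerSeries.coeff_X_pow, PowerSeries.coeff_X, PowerSeries.coeff_one, map_add, map_one, map_ofNat, p0, p1, p2, p3, p4, p5, p6, p7, p8, t0, t1, t2, t3, t4, t5, t6, t7, t8, u0, u1, u2, u3, u4, u5] at h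
    linarith
  have u7 : PowerSeries.coeff 7 (s 1) = (21 : ℚ) := by
    have h := congrArg (PowerSeries.coeff 7) hS1
    norm_num [SkewAux5.coeff_two, SkewAux5.constantCoeff_two, PowerSeries.coeff_mul, Finset.Nat.sum_antidiagonal_eq_sum_range_succ_mk, Finset.sum_range_succ, Finset.sum_range_zero, PowerSeries.coeff_X_pow, PowerSeries.coeff_X, PowerSeries.coeff_one, map_add, map_one, map_ofNat, p0, p1, p2, p3, p4, p5, p6, p7, p8, t0, t1, t2, t3, t4, t5, t6, t7, t8, u0, u1, u2, u3, u4, u5, u6] at h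
    linarith
  have u8 : PowerSeries.coeff 8 (s 1) = (0 : ℚ) := by
    have h := congrArg (PowerSeries.coeff 8) hS1
    norm_num [SkewAux5.coeff_two, SkewAux5.constantCoeff_two, PowerSeries.coeff_mul, Finset.Nat.sum_antidiagonal_eq_sum_range_succ_mk, Finset.sum_range_succ, Finset.sum_range_zero, PowerSeries.coeff_X_pow, PowerSeries.coeff_X, PowerSeries.coeff_one, map_add, map_one, map_ofNat, p0, p1, p2, p3, p4, p5, p6, p7, p8, t0, t1, t2, t3, t4, t5, t6, t7, t8, u0, u1, u2, u3, u4, u5, u6, u7] at h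
    linarith
  have u9 : PowerSeries.coeff 9 (s 1) = (79 : ℚ) := by
    have h := congrArg (PowerSeries.coeff 9) hS1
    norm_num [SkewAux5.coeff_two, SkewAux5.constantCoeff_two, PowerSeries.coeff_mul, Finset.Nat.sum_antidiagonal_eq_sum_range_succ_mk, Finset.sum_range_succ, Finset.sum_range_zero, PowerSeries.coeff_X_pow, PowerSeries.coeff_X, PowerSeries.coeff_one, map_add, map_one, map_ofNat, p0, p1, p2, p3, p4, p5, p6, p7, p8, t0, t1, t2, t3, t4, t5, t6, t7, t8, u0, u1, u2, u3, u4, u5, u6, u7, u8] at h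
    linarith
  exact ⟨t0, t2, t4, t6, t8, u1, u3, u5, u7, u9⟩
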